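/- For every real a > 0 there exists a constant C > 0 such that for every integer g ≥ 2: Σ_{m=2}^{⌊4 log g⌋} (2am/√g)^m · a√g · m² ≤ C/√g. -/

import Mathlib

private lemma sq_le_exp15 {x : ℝ} (hx : 0 ≤ x) : x ^ 2 / 4 ≤ Real.exp x := by
  have h := Real.add_one_le_exp (x / 2)
  have h2 : Real.exp (x / 2) * Real.exp (x / 2) = Real.exp x := by
    rw [← Real.exp_add]; ring_nf
  nlinarith [Real.exp_pos (x / 2)]

private lemma cube_le_exp15 {x : ℝ} (hx : 0 ≤ x) : x ^ 3 / 27 ≤ Real.exp x := by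
  have h1 : x / 3 ≤ Real.exp (x / 3) := by
    have := Real.add_one_le_exp (x / 3); linarith
  have h2 : (x / 3) ^ 3 ≤ Real.exp (x / 3) ^ 3 :=
    pow_le_pow_left₀ (by linarith) h1 3
  have h3 : Real.exp (x / 3) ^ 3 = Real.exp x := by
    rw [← Real.exp_nat_mul]; congr 1; push_cast; ring
  calc x ^ 3 / 27 = (x / 3) ^ 3 := by ring
    _ ≤ Real.exp (x / 3) ^ 3 := h2
    _ = Real.exp x := h3

/-- Case IV estimate in the proof of Proposition 3.7: for each `a > 0` there is
`C > 0` with `Σ_{m=2}^{⌊4 log g⌋} (2am/√g)^m · a√g · m² ≤ C/√g` for all `g ≥ 2`. -/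
theorem stmt15 (a : ℝ) (ha : 0 < a) :
    ∃ C : ℝ, 0 < C ∧ ∀ g : ℕ, 2 ≤ g →
      ∑ m ∈ Finset.Icc 2 (Nat.floor (4 * Real.log g)),
          (2 * a * (m : ℝ) / Real.sqrt g) ^ m * (a * Real.sqrt g) * (m : ℝ) ^ 2 ≤
        C / Real.sqrt g := by
  set v : ℕ → ℝ := fun m => a * (m : ℝ) ^ 2 *
      (2 * a * (m : ℝ) * Real.exp (-((m : ℝ) - 2) / 8)) ^ m with hv
  set m₀ : ℕ := ⌈8192 * a⌉₊ + 4 with hm₀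
  have hv_nonneg : ∀ m : ℕ, 0 ≤ v m := by
    intro m
    have h1 : (0:ℝ) ≤ 2 * a * (m : ℝ) * Real.exp (-((m : ℝ) - 2) / 8) := by positivity
    positivity
  -- smallness of v for m ≥ m₀
  have hv_small : ∀ m : ℕ, m₀ ≤ m → v m ≤ (1 / 2 : ℝ) ^ m := by
    intro m hm
    have hm4 : (4:ℝ) ≤ (m:ℝ) := by
      have : 4 ≤ m := le_trans (by omega) hm
      exact_mod_cast this
    have hma : 8192 * a ≤ (m:ℝ) := by
      have h1 : ⌈8192 * a⌉₊ ≤ m := le_trans (by omega) hm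
      calc 8192 * a ≤ (⌈8192 * a⌉₊ : ℝ) := Nat.le_ceil _
        _ ≤ (m:ℝ) := by exact_mod_cast h1
    -- step 1 : base ≤ 1/4
    have hx : (0:ℝ) ≤ ((m:ℝ) - 2) / 8 := by linarith
    have hE := sq_le_exp15 hx
    have hEpos := Real.exp_pos (((m:ℝ) - 2) / 8)
    have hbase : 2 * a * (m:ℝ) * Real.exp (-((m : ℝ) - 2) / 8) ≤ 1 / 4 := by
      have hkey : 2 * a * (m:ℝ) * 4 ≤ Real.exp (((m:ℝ) - 2) / 8) := by
        nlinarith [sq_nonneg ((m:ℝ) - 8)]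
      rw [show (-((m : ℝ) - 2) / 8) = -(((m : ℝ) - 2) / 8) by ring, Real.exp_neg]
      rw [mul_inv_le_iff₀ hEpos]
      linarith
    have hbase0 : (0:ℝ) ≤ 2 * a * (m:ℝ) * Real.exp (-((m : ℝ) - 2) / 8) := by positivity
    -- step 2 : a m² ≤ 2^m
    have h2m : a * (m:ℝ) ^ 2 ≤ 2 ^ m := by
      have hlog : Real.log 2 ≥ 0.6931471803 := le_of_lt Real.log_two_gt_d9
      have hcube := cube_le_exp15 (x := (m:ℝ) * Real.log 2) (by positivity)
      have h2e : (2:ℝ) ^ m = Real.exp ((m:ℝ) * Real.log 2) := by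
        rw [Real.exp_nat_mul, Real.exp_log (by norm_num)]
      rw [h2e]
      have hmpos : (0:ℝ) < (m:ℝ) := by linarith
      nlinarith [pow_le_pow_left₀ (by positivity : (0:ℝ) ≤ (m:ℝ) * 0.6931471803)
          (by nlinarith : (m:ℝ) * 0.6931471803 ≤ (m:ℝ) * Real.log 2) 3, sq_nonneg (m:ℝ),
        mul_pos (mul_pos hmpos hmpos) hmpos]
    -- combine
    calc v m ≤ a * (m:ℝ) ^ 2 * (1 / 4 : ℝ) ^ m := by
          exact mul_le_mul_of_nonneg_left (pow_le_pow_left₀ hbase0 hbase m) (by positivity)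
      _ = (a * (m:ℝ) ^ 2 * (1 / 2 : ℝ) ^ m) * (1 / 2 : ℝ) ^ m := by
          rw [show (1/4 : ℝ) = (1/2) * (1/2) by norm_num, mul_pow]; ring
      _ ≤ (2 ^ m * (1 / 2 : ℝ) ^ m) * (1 / 2 : ℝ) ^ m := by
          have : a * (m:ℝ) ^ 2 * (1 / 2 : ℝ) ^ m ≤ 2 ^ m * (1 / 2 : ℝ) ^ m :=
            mul_le_mul_of_nonneg_right h2m (by positivity)
          exact mul_le_mul_of_nonneg_right this (by positivity)
      _ = (1 / 2 : ℝ) ^ m := by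
          rw [← mul_pow]; norm_num
  -- uniform bound on partial sums of v
  have hsum : ∀ N : ℕ, ∑ m ∈ Finset.Icc 2 N, v m ≤ (∑ m ∈ Finset.Icc 2 m₀, v m) + 2 := by
    intro N
    rcases le_or_gt N m₀ with h | h
    · have h1 : ∑ m ∈ Finset.Icc 2 N, v m ≤ ∑ m ∈ Finset.Icc 2 m₀, v m :=
        Finset.sum_le_sum_of_subset_of_nonneg (Finset.Icc_subset_Icc_right h)
          (fun i _ _ => hv_nonneg i)
      linarith
    · have hsplit : ∑ m ∈ Finset.Icc 2 N, v m =
          (∑ m ∈ Finset.Icc 2 m₀, v m) + ∑ m ∈ Finset.Ioc m₀ N, v m := by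
        have hu : Finset.Icc 2 N = Finset.Icc 2 m₀ ∪ Finset.Ioc m₀ N := by
          ext x
          simp only [Finset.mem_Icc, Finset.mem_Ioc, Finset.mem_union]
          omega
        have hdisj : Disjoint (Finset.Icc 2 m₀) (Finset.Ioc m₀ N) := by
          rw [Finset.disjoint_left]
          intro x hx hx'
          simp only [Finset.mem_Icc] at hx
          simp only [Finset.mem_Ioc] at hx'
          omega
        rw [hu, Finset.sum_union hdisj]
      have htail : ∑ m ∈ Finset.Ioc m₀ N, v m ≤ 2 := by
        calc ∑ m ∈ Finset.Ioc m₀ N, v m ≤ ∑ m ∈ Finset.Ioc m₀ N, (1/2 : ℝ) ^ m :=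
              Finset.sum_le_sum (fun i hi => hv_small i (Finset.mem_Ioc.mp hi).1.le)
          _ ≤ ∑ m ∈ Finset.range (N + 1), (1/2 : ℝ) ^ m := by
              apply Finset.sum_le_sum_of_subset_of_nonneg
              · intro x hx
                simp only [Finset.mem_Ioc] at hx
                simp only [Finset.mem_range]; omega
              · intro i _ _; positivity
          _ ≤ 2 := by
              rw [geom_sum_eq (by norm_num : (1/2:ℝ) ≠ 1)]
              have : (0:ℝ) ≤ (1/2:ℝ) ^ (N + 1) := by positivity
              rw [div_le_iff_of_neg (by norm_num : (1/2:ℝ) - 1 < 0)]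
              linarith
      linarith [hsplit]
  have hC0 : (0:ℝ) < (∑ m ∈ Finset.Icc 2 m₀, v m) + 2 := by
    have := Finset.sum_nonneg (fun i (_ : i ∈ Finset.Icc 2 m₀) => hv_nonneg i)
    linarith
  refine ⟨(∑ m ∈ Finset.Icc 2 m₀, v m) + 2, hC0, ?_⟩
  intro g hg
  have hg1 : (1:ℝ) ≤ (g:ℝ) := by exact_mod_cast Nat.one_le_of_lt hg
  have hg0 : (0:ℝ) < (g:ℝ) := by linarith
  set s : ℝ := Real.sqrt g with hs
  have hs1 : (1:ℝ) ≤ s := by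
    rw [hs, show (1:ℝ) = Real.sqrt 1 by simp]
    exact Real.sqrt_le_sqrt hg1
  have hs0 : (0:ℝ) < s := by linarith
  -- per-term bound
  have key : ∀ m ∈ Finset.Icc 2 (Nat.floor (4 * Real.log g)),
      (2 * a * (m : ℝ) / s) ^ m * (a * s) * (m : ℝ) ^ 2 ≤ v m / s := by
    intro m hm
    obtain ⟨hm2, hmN⟩ := Finset.mem_Icc.mp hm
    have hml : (m:ℝ) ≤ 4 * Real.log g := by
      have h0 : (0:ℝ) ≤ 4 * Real.log g := by
        have : (0:ℝ) ≤ Real.log g := Real.log_nonneg hg1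
        linarith
      exact (Nat.le_floor_iff h0).mp hmN
    have hm2R : (2:ℝ) ≤ (m:ℝ) := by exact_mod_cast hm2
    -- √g ≥ exp(m/8)
    have hE8 : Real.exp ((m:ℝ) / 8) ≤ s := by
      rw [hs]
      rw [Real.le_sqrt (Real.exp_nonneg _) hg0.le]
      have : Real.exp ((m:ℝ) / 8) ^ 2 = Real.exp ((m:ℝ) / 4) := by
        rw [← Real.exp_nat_mul]; ring_nf
      rw [this]
      calc Real.exp ((m:ℝ) / 4) ≤ Real.exp (Real.log g) := by
            apply Real.exp_le_exp.mpr; linarith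
        _ = (g:ℝ) := Real.exp_log hg0
    set c : ℝ := 2 * a * (m:ℝ) with hc
    set d : ℝ := Real.exp (-((m : ℝ) - 2) / 8) with hd
    have hc0 : 0 ≤ c := by positivity
    have hd0 : 0 < d := Real.exp_pos _
    -- core: s * s ≤ d ^ m * s ^ m
    have hcore : s * s ≤ d ^ m * s ^ m := by
      have hsplit : s ^ m = s ^ (m - 2) * s ^ 2 := by
        rw [← pow_add]; congr 1; omega
      have hpow : Real.exp ((m:ℝ) / 8) ^ (m - 2) ≤ s ^ (m - 2) :=
        pow_le_pow_left₀ (Real.exp_nonneg _) hE8 _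
      have hde : d ^ m * Real.exp ((m:ℝ) / 8) ^ (m - 2) = 1 := by
        rw [hd, ← Real.exp_nat_mul, ← Real.exp_nat_mul, ← Real.exp_add, ← Real.exp_zero]
        congr 1
        have hcast : ((m - 2 : ℕ) : ℝ) = (m:ℝ) - 2 := by
          rw [Nat.cast_sub hm2]; norm_num
        rw [hcast]; ring
      calc s * s = (d ^ m * Real.exp ((m:ℝ) / 8) ^ (m - 2)) * s ^ 2 := by
            rw [hde]; ring
        _ ≤ (d ^ m * s ^ (m - 2)) * s ^ 2 := by
            apply mul_le_mul_of_nonneg_right _ (by positivity)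
            exact mul_le_mul_of_nonneg_left hpow (by positivity)
        _ = d ^ m * s ^ m := by rw [hsplit]; ring
    have hfrac : s / s ^ m ≤ d ^ m / s :=
      div_le_div_iff₀ (pow_pos hs0 m) hs0 |>.mpr (by linarith [hcore])
    have h1 : a * (m:ℝ) ^ 2 * c ^ m * (s / s ^ m) ≤ a * (m:ℝ) ^ 2 * c ^ m * (d ^ m / s) :=
      mul_le_mul_of_nonneg_left hfrac (by positivity)
    have e1 : (c / s) ^ m * (a * s) * (m : ℝ) ^ 2 =
        a * (m:ℝ) ^ 2 * c ^ m * (s / s ^ m) := by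
      rw [div_pow]; ring
    have e2 : v m / s = a * (m:ℝ) ^ 2 * c ^ m * (d ^ m / s) := by
      rw [hv]; simp only []
      rw [show 2 * a * (m:ℝ) * Real.exp (-((m : ℝ) - 2) / 8) = c * d from rfl, mul_pow]
      ring
    rw [e1, e2]
    exact h1
  calc ∑ m ∈ Finset.Icc 2 (Nat.floor (4 * Real.log g)),
        (2 * a * (m : ℝ) / s) ^ m * (a * s) * (m : ℝ) ^ 2
      ≤ ∑ m ∈ Finset.Icc 2 (Nat.floor (4 * Real.log g)), v m / s := Finset.sum_le_sum key
    _ = (∑ m ∈ Finset.Icc 2 (Nat.floor (4 * Real.log g)), v m) / s := by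
        rw [Finset.sum_div]
    _ ≤ ((∑ m ∈ Finset.Icc 2 m₀, v m) + 2) / s := by
        exact (div_le_div_iff_of_pos_right hs0).mpr (hsum _)
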